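/- Let n ≥ 1, let F be a C^∞ function on a connected open set Ω ⊆ ℝ^{n+1} on which U(F) is nowhere zero, let I ⊆ ℝ be an open interval containing F(Ω), and let ψ : I → ℝ be a C^∞ function with nowhere-vanishing derivative ψ′ (so ψ′ has constant sign ε ∈ {±1} on I). Then U(ψ∘F) is nowhere zero on Ω and the equiaffine normal fields satisfy 𝔑(ψ∘F)(x) = ε · 𝔑(F)(x) for every x ∈ Ω; that is, the operator F ↦ 𝔑(F) is invariant under orientation-preserving external reparameterizations. -/

import Mathlib

set_option linter.unusedSectionVars false
set_option maxHeartbeats 1000000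
open Polynomial


open Matrix

noncomputable def pd1 {ι : Type*} [Fintype ι] [DecidableEq ι]
    (F : (ι → ℝ) → ℝ) (i : ι) (x : ι → ℝ) : ℝ :=
  fderiv ℝ F x (Pi.single i 1)

noncomputable def gradv {ι : Type*} [Fintype ι] [DecidableEq ι]
    (F : (ι → ℝ) → ℝ) (x : ι → ℝ) : ι → ℝ :=
  fun i => pd1 F i x

noncomputable def hessM {ι : Type*} [Fintype ι] [DecidableEq ι]
    (F : (ι → ℝ) → ℝ) (x : ι → ℝ) : Matrix ι ι ℝ :=
  Matrix.of fun i j => pd1 (pd1 F j) i x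

noncomputable def Hdet {ι : Type*} [Fintype ι] [DecidableEq ι]
    (F : (ι → ℝ) → ℝ) (x : ι → ℝ) : ℝ :=
  (hessM F x).det

noncomputable def Nvec {ι : Type*} [Fintype ι] [DecidableEq ι]
    (F : (ι → ℝ) → ℝ) (x : ι → ℝ) : ι → ℝ :=
  (hessM F x).adjugate *ᵥ gradv F x

noncomputable def Uval {ι : Type*} [Fintype ι] [DecidableEq ι]
    (F : (ι → ℝ) → ℝ) (x : ι → ℝ) : ℝ :=
  gradv F x ⬝ᵥ Nvec F x

/-- The matrix `σ(F)` of the context, computed with the choice `q = 1` (it is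
independent of the choice of nonvanishing `q`). -/
noncomputable def sigmaF {n : ℕ} (F : (Fin (n+1) → ℝ) → ℝ) (x : Fin (n+1) → ℝ) :
    Matrix (Fin (n+1)) (Fin (n+1)) ℝ :=
  (hessM F x - ((Uval F x)⁻¹ * Hdet F x) • Matrix.vecMulVec (gradv F x) (gradv F x)
      + (Uval F x)⁻¹ • Matrix.vecMulVec (gradv F x) (gradv F x))⁻¹
    - (Uval F x)⁻¹ • Matrix.vecMulVec (Nvec F x) (Nvec F x)

/-- The one-form `μ(F) = (n+2)⁻¹ ∇(log |U(F)|)`. -/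
noncomputable def muF (n : ℕ) (F : (Fin (n+1) → ℝ) → ℝ) (x : Fin (n+1) → ℝ) :
    Fin (n+1) → ℝ :=
  ((n : ℝ) + 2)⁻¹ • gradv (fun y => Real.log |Uval F y|) x

/-- The equiaffine normal field
`𝔑(F) = −|U(F)|^{1/(n+2)} U(F)⁻¹ N(F) − |U(F)|^{1/(n+2)} σ(F) μ(F)`. -/
noncomputable def EANormal (n : ℕ) (F : (Fin (n+1) → ℝ) → ℝ) (x : Fin (n+1) → ℝ) :
    Fin (n+1) → ℝ :=
  (-(|Uval F x| ^ ((1 : ℝ)/((n : ℝ)+2)) * (Uval F x)⁻¹)) • Nvec F x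
    - (|Uval F x| ^ ((1 : ℝ)/((n : ℝ)+2))) • (sigmaF F x *ᵥ muF n F x)


section Algebra
variable {ι : Type*} [Fintype ι] [DecidableEq ι]

omit [Fintype ι] [DecidableEq ι] in
lemma smul_vecMulVec (t : ℝ) (u v : ι → ℝ) :
    t • vecMulVec u v = vecMulVec (t • u) v := by
  ext i j
  simp [vecMulVec_apply, mul_assoc]

lemma vecMulVec_mulVec (u v w : ι → ℝ) :
    vecMulVec u v *ᵥ w = (v ⬝ᵥ w) • u := by
  ext i
  simp only [mulVec, dotProduct, vecMulVec_apply, Pi.smul_apply, smul_eq_mul]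
  rw [Finset.sum_mul]
  exact Finset.sum_congr rfl fun j _ => by ring

lemma det_eval_aux (A : Matrix ι ι ℝ) (s : ℝ) :
    ((-A).charpoly).eval s = (A + s • 1).det := by
  have h := RingHom.map_det (evalRingHom s) (charmatrix (-A))
  rw [RingHom.mapMatrix_apply] at h
  rw [Matrix.charpoly, show eval s (charmatrix (-A)).det
      = (evalRingHom s) (charmatrix (-A)).det from rfl, h]
  congr 1
  ext i j
  by_cases hij : i = j
  · subst hij
    simp [charmatrix_apply_eq, Matrix.one_apply, add_comm]
  · simp [charmatrix_apply_ne _ _ _ hij, Matrix.one_apply, hij]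

lemma det_add_vecMulVec (A : Matrix ι ι ℝ) (u v : ι → ℝ) :
    (A + vecMulVec u v).det = A.det + v ⬝ᵥ (A.adjugate *ᵥ u) := by
  have inv_case : ∀ B : Matrix ι ι ℝ, IsUnit B.det →
      (B + vecMulVec u v).det = B.det + v ⬝ᵥ (B.adjugate *ᵥ u) := by
    intro B hB
    have h1 : replicateRow Unit v * B⁻¹ * replicateCol Unit u = replicateRow Unit v * replicateCol Unit (B⁻¹ *ᵥ u) := by
      rw [Matrix.mul_assoc, replicateCol_mulVec]
    have h2 : B.adjugate *ᵥ u = B.det • (B⁻¹ *ᵥ u) := by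
      rw [← cramer_eq_adjugate_mulVec, ← det_smul_inv_mulVec_eq_cramer _ _ hB]
    have h3 : (1 + replicateRow Unit v * replicateCol Unit (B⁻¹ *ᵥ u)).det = 1 + v ⬝ᵥ (B⁻¹ *ᵥ u) := by
      rw [det_unique]
      simp [Matrix.add_apply, Matrix.one_apply_eq, replicateRow_mul_replicateCol_apply]
    rw [vecMulVec_eq (ι := Unit), det_add_replicateCol_mul_replicateRow hB, h1, h3, h2, dotProduct_smul,
      smul_eq_mul]
    ring
  have hdense : Dense {s : ℝ | IsUnit ((A + s • 1).det)} := by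
    have hfin : Set.Finite {s : ℝ | ¬ IsUnit ((A + s • 1).det)} := by
      apply Set.Finite.subset (Polynomial.finite_setOf_isRoot
        (p := (-A).charpoly) (Matrix.charpoly_monic _).ne_zero)
      intro s hs
      simp only [Set.mem_setOf_eq, isUnit_iff_ne_zero, not_not] at hs
      simpa [Polynomial.IsRoot, det_eval_aux] using hs
    have : Dense {s : ℝ | ¬ IsUnit ((A + s • 1).det)}ᶜ :=
      Set.Countable.dense_compl ℝ hfin.countable
    simpa [Set.compl_setOf] using this
  have hcontM : Continuous fun s : ℝ => A + s • (1 : Matrix ι ι ℝ) :=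
    continuous_const.add (continuous_id.smul continuous_const)
  have hcont : Continuous fun s : ℝ =>
      ((A + s • 1) + vecMulVec u v).det - ((A + s • 1).det
        + v ⬝ᵥ ((A + s • 1).adjugate *ᵥ u)) := by
    apply Continuous.sub
    · exact (hcontM.add continuous_const).matrix_det
    · apply hcontM.matrix_det.add
      exact (continuous_const.dotProduct
        (hcontM.matrix_adjugate.matrix_mulVec continuous_const))
  have heq : ∀ s : ℝ, s ∈ {s : ℝ | IsUnit ((A + s • 1).det)} →
      ((A + s • 1) + vecMulVec u v).det - ((A + s • 1).det
        + v ⬝ᵥ ((A + s • 1).adjugate *ᵥ u)) = 0 := by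
    intro s hs
    rw [inv_case _ hs, sub_self]
  have h0 := congrFun (Continuous.ext_on hdense hcont continuous_const heq) 0
  simp only [zero_smul, add_zero] at h0
  linarith [h0]
end Algebra

section Alg2
variable {n : ℕ}

lemma vecMulVec_smul_smul (c d : ℝ) (u v : Fin (n+1) → ℝ) :
    vecMulVec (c • u) (d • v) = (c * d) • vecMulVec u v := by
  ext i j
  simp [vecMulVec_apply]
  ring

lemma vecMulVec_transpose (u v : Fin (n+1) → ℝ) :
    (vecMulVec u v)ᵀ = vecMulVec v u := by
  ext i j
  simp [vecMulVec_apply, mul_comm]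

lemma det_add_smul_vmv (A : Matrix (Fin (n+1)) (Fin (n+1)) ℝ) (g : Fin (n+1) → ℝ) (t : ℝ) :
    (A + t • vecMulVec g g).det = A.det + t * (g ⬝ᵥ (A.adjugate *ᵥ g)) := by
  rw [smul_vecMulVec, det_add_vecMulVec, mulVec_smul, dotProduct_smul, smul_eq_mul]

lemma det_smul_add_smul_vmv (A : Matrix (Fin (n+1)) (Fin (n+1)) ℝ) (g : Fin (n+1) → ℝ)
    (c t : ℝ) :
    (c • A + t • vecMulVec g g).det
      = c^(n+1) * A.det + t * c^n * (g ⬝ᵥ (A.adjugate *ᵥ g)) := by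
  rw [det_add_smul_vmv, det_smul, adjugate_smul, smul_mulVec, dotProduct_smul]
  simp only [Fintype.card_fin, smul_eq_mul, Nat.add_sub_cancel_left, Nat.add_sub_cancel]
  ring


lemma adj_comb_mulVec (A : Matrix (Fin (n+1)) (Fin (n+1)) ℝ) (g : Fin (n+1) → ℝ)
    (c b : ℝ) (hc : c ≠ 0) (hU : g ⬝ᵥ (A.adjugate *ᵥ g) ≠ 0) :
    (c • A + b • vecMulVec g g).adjugate *ᵥ g = c^n • (A.adjugate *ᵥ g) := by
  set U : ℝ := g ⬝ᵥ (A.adjugate *ᵥ g) with hUdef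
  set H : ℝ := A.det with hHdef
  set w : Fin (n+1) → ℝ := A.adjugate *ᵥ g with hwdef
  set t₀ : ℝ := -(c * H) / U with ht₀
  -- pointwise identity away from t₀
  have key : ∀ t : ℝ, t ≠ t₀ →
      (c • A + t • vecMulVec g g).adjugate *ᵥ g = c^n • w := by
    intro t ht
    have hct : c * H + t * U ≠ 0 := by
      intro h
      apply ht
      rw [ht₀]
      field_simp
      linarith [h]
    set M := c • A + t • vecMulVec g g with hM
    have hMw : M *ᵥ w = (c * H + t * U) • g := by
      rw [hM, add_mulVec, smul_mulVec, smul_mulVec, _root_.vecMulVec_mulVec,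
        hwdef, mulVec_mulVec, mul_adjugate, ← hHdef, smul_mulVec, one_mulVec,
        ← hUdef]
      rw [smul_smul, smul_smul, ← add_smul]
    have hdet : M.det = c^n * (c * H + t * U) := by
      rw [hM, det_smul_add_smul_vmv, ← hHdef, ← hUdef]
      ring
    have h1 : M.adjugate *ᵥ (M *ᵥ w) = (c^n * (c * H + t * U)) • w := by
      rw [mulVec_mulVec, adjugate_mul, ← hdet, smul_mulVec, one_mulVec]
    rw [hMw, mulVec_smul] at h1
    have h2 : (c * H + t * U) • (M.adjugate *ᵥ g) = (c * H + t * U) • (c^n • w) := by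
      rw [h1, smul_smul]
      congr 1
      ring
    exact smul_right_injective _ hct h2
  -- continuity
  have hcontM : Continuous fun t : ℝ =>
      ((c • A + t • vecMulVec g g).adjugate *ᵥ g : Fin (n+1) → ℝ) :=
    ((continuous_const.add (continuous_id.smul continuous_const)).matrix_adjugate).matrix_mulVec
      continuous_const
  have hdense : Dense ({t₀}ᶜ : Set ℝ) := dense_compl_singleton t₀
  have := Continuous.ext_on hdense hcontM continuous_const
    (fun t (ht : t ∈ ({t₀}ᶜ : Set ℝ)) => key t ht)
  exact congrFun this b

/-- The matrix `M_q`. -/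
noncomputable def MqM (A : Matrix (Fin (n+1)) (Fin (n+1)) ℝ) (g : Fin (n+1) → ℝ) (q : ℝ) :
    Matrix (Fin (n+1)) (Fin (n+1)) ℝ :=
  A + ((q - A.det) * (g ⬝ᵥ (A.adjugate *ᵥ g))⁻¹) • vecMulVec g g

lemma MqM_det (A : Matrix (Fin (n+1)) (Fin (n+1)) ℝ) (g : Fin (n+1) → ℝ) (q : ℝ)
    (hU : g ⬝ᵥ (A.adjugate *ᵥ g) ≠ 0) : (MqM A g q).det = q := by
  rw [MqM, det_add_smul_vmv]
  field_simp
  ring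

lemma MqM_mulVec (A : Matrix (Fin (n+1)) (Fin (n+1)) ℝ) (g : Fin (n+1) → ℝ) (q : ℝ)
    (hU : g ⬝ᵥ (A.adjugate *ᵥ g) ≠ 0) :
    MqM A g q *ᵥ (A.adjugate *ᵥ g) = q • g := by
  rw [MqM, add_mulVec, smul_mulVec, _root_.vecMulVec_mulVec, mulVec_mulVec,
    mul_adjugate, smul_mulVec, one_mulVec, smul_smul, ← add_smul]
  congr 1
  field_simp
  ring

lemma MqM_isUnit_det (A : Matrix (Fin (n+1)) (Fin (n+1)) ℝ) (g : Fin (n+1) → ℝ) (q : ℝ)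
    (hU : g ⬝ᵥ (A.adjugate *ᵥ g) ≠ 0) (hq : q ≠ 0) : IsUnit (MqM A g q).det := by
  rw [MqM_det A g q hU]
  exact isUnit_iff_ne_zero.2 hq

lemma MqM_inv_mulVec (A : Matrix (Fin (n+1)) (Fin (n+1)) ℝ) (g : Fin (n+1) → ℝ) (q : ℝ)
    (hU : g ⬝ᵥ (A.adjugate *ᵥ g) ≠ 0) (hq : q ≠ 0) :
    (MqM A g q)⁻¹ *ᵥ g = q⁻¹ • (A.adjugate *ᵥ g) := by
  have h1 : (MqM A g q)⁻¹ *ᵥ (MqM A g q *ᵥ (A.adjugate *ᵥ g))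
      = A.adjugate *ᵥ g := by
    rw [mulVec_mulVec, nonsing_inv_mul _ (MqM_isUnit_det A g q hU hq), one_mulVec]
  rw [MqM_mulVec A g q hU, mulVec_smul] at h1
  rw [← h1, smul_smul, inv_mul_cancel₀ hq, one_smul]

lemma MqM_transpose (A : Matrix (Fin (n+1)) (Fin (n+1)) ℝ) (g : Fin (n+1) → ℝ) (q : ℝ)
    (hA : Aᵀ = A) : (MqM A g q)ᵀ = MqM A g q := by
  rw [MqM, transpose_add, transpose_smul, vecMulVec_transpose, hA]

lemma inv_smul_mat (c : ℝ) (M : Matrix (Fin (n+1)) (Fin (n+1)) ℝ) (hc : c ≠ 0)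
    (hM : IsUnit M.det) : (c • M)⁻¹ = c⁻¹ • M⁻¹ := by
  apply Matrix.inv_eq_right_inv
  rw [Matrix.smul_mul, Matrix.mul_smul, smul_smul, mul_nonsing_inv _ hM,
    mul_inv_cancel₀ hc, one_smul]

lemma MqM_indep (A : Matrix (Fin (n+1)) (Fin (n+1)) ℝ) (g : Fin (n+1) → ℝ) (q q' : ℝ)
    (hA : Aᵀ = A) (hU : g ⬝ᵥ (A.adjugate *ᵥ g) ≠ 0) (hq : q ≠ 0) (hq' : q' ≠ 0) :
    (MqM A g q)⁻¹ - (q⁻¹ * (g ⬝ᵥ (A.adjugate *ᵥ g))⁻¹) •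
        vecMulVec (A.adjugate *ᵥ g) (A.adjugate *ᵥ g)
      = (MqM A g q')⁻¹ - (q'⁻¹ * (g ⬝ᵥ (A.adjugate *ᵥ g))⁻¹) •
        vecMulVec (A.adjugate *ᵥ g) (A.adjugate *ᵥ g) := by
  set U : ℝ := g ⬝ᵥ (A.adjugate *ᵥ g) with hUdef
  set N : Fin (n+1) → ℝ := A.adjugate *ᵥ g with hNdef
  have hvq : (MqM A g q)⁻¹ *ᵥ g = q⁻¹ • N := MqM_inv_mulVec A g q hU hq
  have hvq' : g ᵥ* (MqM A g q')⁻¹ = q'⁻¹ • N := by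
    have h1 : g ᵥ* (MqM A g q')⁻¹ = ((MqM A g q')⁻¹)ᵀ *ᵥ g := by
      rw [← vecMul_transpose, transpose_transpose]
    rw [h1, transpose_nonsing_inv, MqM_transpose A g q' hA]
    exact MqM_inv_mulVec A g q' hU hq'
  have hdiff : MqM A g q' - MqM A g q = ((q' - q) * U⁻¹) • vecMulVec g g := by
    rw [MqM, MqM, ← hUdef]
    rw [add_sub_add_left_eq_sub, ← sub_smul]
    congr 1
    ring
  have key : (MqM A g q)⁻¹ - (MqM A g q')⁻¹
      = (MqM A g q)⁻¹ * (MqM A g q' - MqM A g q) * (MqM A g q')⁻¹ := by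
    rw [Matrix.mul_sub, Matrix.sub_mul, Matrix.mul_assoc,
      mul_nonsing_inv _ (MqM_isUnit_det A g q' hU hq'), Matrix.mul_one,
      nonsing_inv_mul _ (MqM_isUnit_det A g q hU hq), Matrix.one_mul]
  have hmat : (MqM A g q)⁻¹ * vecMulVec g g * (MqM A g q')⁻¹
      = (q⁻¹ * q'⁻¹) • vecMulVec N N := by
    rw [vecMulVec_eq (ι := Unit), ← Matrix.mul_assoc, ← replicateCol_mulVec, hvq,
      Matrix.mul_assoc, ← replicateRow_vecMul, hvq', ← vecMulVec_eq (ι := Unit),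
      vecMulVec_smul_smul]
  have expand : (MqM A g q)⁻¹ * (((q' - q) * U⁻¹) • vecMulVec g g) * (MqM A g q')⁻¹
      = (((q' - q) * U⁻¹) * (q⁻¹ * q'⁻¹)) • vecMulVec N N := by
    rw [Matrix.mul_smul, Matrix.smul_mul, hmat, smul_smul]
  have final : (MqM A g q)⁻¹ - (MqM A g q')⁻¹
      = (q⁻¹ * U⁻¹ - q'⁻¹ * U⁻¹) • vecMulVec N N := by
    rw [key, hdiff, expand]
    congr 1
    field_simp
  rw [sub_eq_sub_iff_sub_eq_sub, final, ← sub_smul]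

lemma M1_shape (A : Matrix (Fin (n+1)) (Fin (n+1)) ℝ) (g : Fin (n+1) → ℝ) :
    A - ((g ⬝ᵥ (A.adjugate *ᵥ g))⁻¹ * A.det) • vecMulVec g g
      + (g ⬝ᵥ (A.adjugate *ᵥ g))⁻¹ • vecMulVec g g = MqM A g 1 := by
  rw [MqM, sub_eq_add_neg, add_assoc, ← neg_smul, ← add_smul]
  congr 1
  ring

lemma sigma_mulVec_g (A : Matrix (Fin (n+1)) (Fin (n+1)) ℝ) (g : Fin (n+1) → ℝ)
    (hU : g ⬝ᵥ (A.adjugate *ᵥ g) ≠ 0) :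
    ((MqM A g 1)⁻¹ - (g ⬝ᵥ (A.adjugate *ᵥ g))⁻¹ •
        vecMulVec (A.adjugate *ᵥ g) (A.adjugate *ᵥ g)) *ᵥ g = 0 := by
  rw [sub_mulVec, MqM_inv_mulVec A g 1 hU one_ne_zero, smul_mulVec,
    _root_.vecMulVec_mulVec, dotProduct_comm, smul_smul]
  rw [inv_one, one_smul, inv_mul_cancel₀ (by rwa [dotProduct_comm] at hU), one_smul,
    sub_self]

lemma sigma_comp (A : Matrix (Fin (n+1)) (Fin (n+1)) ℝ) (g : Fin (n+1) → ℝ) (c b : ℝ)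
    (hA : Aᵀ = A) (hc : c ≠ 0) (hU : g ⬝ᵥ (A.adjugate *ᵥ g) ≠ 0) :
    ((c • A + b • vecMulVec g g)
        - ((c^(n+2) * (g ⬝ᵥ (A.adjugate *ᵥ g)))⁻¹ * (c • A + b • vecMulVec g g).det) •
            vecMulVec (c • g) (c • g)
        + (c^(n+2) * (g ⬝ᵥ (A.adjugate *ᵥ g)))⁻¹ • vecMulVec (c • g) (c • g))⁻¹
      - (c^(n+2) * (g ⬝ᵥ (A.adjugate *ᵥ g)))⁻¹ •
          vecMulVec (c^(n+1) • (A.adjugate *ᵥ g)) (c^(n+1) • (A.adjugate *ᵥ g))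
    = c⁻¹ • ((MqM A g 1)⁻¹ - (g ⬝ᵥ (A.adjugate *ᵥ g))⁻¹ •
          vecMulVec (A.adjugate *ᵥ g) (A.adjugate *ᵥ g)) := by
  set U : ℝ := g ⬝ᵥ (A.adjugate *ᵥ g) with hUdef
  set H : ℝ := A.det with hHdef
  set N : Fin (n+1) → ℝ := A.adjugate *ᵥ g with hNdef
  set q' : ℝ := (c^(n+1))⁻¹ with hq'def
  have hq' : q' ≠ 0 := inv_ne_zero (pow_ne_zero _ hc)
  have hcn2 : c^(n+2) ≠ 0 := pow_ne_zero _ hc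
  have hcn1 : c^(n+1) ≠ 0 := pow_ne_zero _ hc
  have hdet' : (c • A + b • vecMulVec g g).det = c^(n+1) * H + b * c^n * U :=
    det_smul_add_smul_vmv A g c b
  have hqc : c^(n+1) * q' = 1 := mul_inv_cancel₀ hcn1
  clear_value q'
  clear hq'def
  have hm : (c • A + b • vecMulVec g g)
        - ((c^(n+2) * U)⁻¹ * (c • A + b • vecMulVec g g).det) • vecMulVec (c • g) (c • g)
        + (c^(n+2) * U)⁻¹ • vecMulVec (c • g) (c • g) = c • MqM A g q' := by
    rw [hdet', MqM]
    ext i j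
    simp only [Matrix.add_apply, Matrix.sub_apply, Matrix.smul_apply, vecMulVec_apply,
      Pi.smul_apply, smul_eq_mul]
    field_simp
    linear_combination (-(c ^ 2 * g i * g j)) * hqc + (c ^ 3 * c ^ n * g i * g j * (H - q')) * (mul_inv_cancel₀ hU)
  rw [hm, inv_smul_mat c _ hc (MqM_isUnit_det A g q' hU hq'),
    vecMulVec_smul_smul, smul_smul]
  have hscal : (c^(n+2) * U)⁻¹ * (c^(n+1) * c^(n+1)) = c⁻¹ * (q'⁻¹ * U⁻¹) := by
    have hq'inv : q'⁻¹ = c^(n+1) := by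
      field_simp
      linear_combination (-1 : ℝ) * hqc
    rw [hq'inv]
    field_simp
    ring
  rw [hscal, ← smul_smul, ← smul_sub,
    MqM_indep A g q' 1 hA hU hq' one_ne_zero, inv_one, one_mul]

end Alg2

section AnalysisAux
variable {ι : Type*} [Fintype ι] [DecidableEq ι]

lemma contDiffOn_pd1 {F : (ι → ℝ) → ℝ} {Ω : Set (ι → ℝ)}
    (hF : ContDiffOn ℝ (⊤ : ℕ∞) F Ω) (hΩ : IsOpen Ω) (i : ι) :
    ContDiffOn ℝ (⊤ : ℕ∞) (pd1 F i) Ω := by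
  have h1 : ContDiffOn ℝ (⊤ : ℕ∞) (fderiv ℝ F) Ω :=
    hF.fderiv_of_isOpen hΩ (le_of_eq rfl)
  exact h1.clm_apply contDiffOn_const

lemma diffAt_of_contDiffOn {E₂ : Type*} [NormedAddCommGroup E₂] [NormedSpace ℝ E₂]
    {F : (ι → ℝ) → E₂} {Ω : Set (ι → ℝ)}
    (hF : ContDiffOn ℝ (⊤ : ℕ∞) F Ω) (hΩ : IsOpen Ω) {x : ι → ℝ} (hx : x ∈ Ω) :
    DifferentiableAt ℝ F x :=
  (hF.differentiableOn (by simp)).differentiableAt (hΩ.mem_nhds hx)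

lemma diffAt_finset_prod {κ : Type*} [DecidableEq κ] (u : Finset κ)
    (f : κ → (ι → ℝ) → ℝ) {x : ι → ℝ} (h : ∀ k ∈ u, DifferentiableAt ℝ (f k) x) :
    DifferentiableAt ℝ (fun y => ∏ k ∈ u, f k y) x :=
  (HasFDerivAt.finset_prod (fun k hk => (h k hk).hasFDerivAt)).differentiableAt

lemma diffAt_det {κ : Type*} [Fintype κ] [DecidableEq κ]
    {M : (ι → ℝ) → Matrix κ κ ℝ} {x : ι → ℝ}
    (h : ∀ i j, DifferentiableAt ℝ (fun y => M y i j) x) :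
    DifferentiableAt ℝ (fun y => (M y).det) x := by
  have : (fun y => (M y).det)
      = fun y => ∑ σ : Equiv.Perm κ, ((Equiv.Perm.sign σ : ℤ) : ℝ)
          * ∏ i, M y (σ i) i := by
    funext y
    rw [Matrix.det_apply]
    exact Finset.sum_congr rfl fun σ _ => by
      rw [Units.smul_def, zsmul_eq_mul]
  rw [this]
  apply DifferentiableAt.fun_sum
  intro σ _
  exact (diffAt_finset_prod Finset.univ (fun i y => M y (σ i) i)
    (fun i _ => h (σ i) i)).const_mul _


lemma diffAt_hess_entry {F : (ι → ℝ) → ℝ} {Ω : Set (ι → ℝ)}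
    (hF : ContDiffOn ℝ (⊤ : ℕ∞) F Ω) (hΩ : IsOpen Ω) {x : ι → ℝ} (hx : x ∈ Ω)
    (i j : ι) : DifferentiableAt ℝ (fun y => hessM F y i j) x :=
  diffAt_of_contDiffOn (contDiffOn_pd1 (contDiffOn_pd1 hF hΩ j) hΩ i) hΩ hx

lemma diffAt_adj_entry {F : (ι → ℝ) → ℝ} {Ω : Set (ι → ℝ)}
    (hF : ContDiffOn ℝ (⊤ : ℕ∞) F Ω) (hΩ : IsOpen Ω) {x : ι → ℝ} (hx : x ∈ Ω)
    (i j : ι) : DifferentiableAt ℝ (fun y => (hessM F y).adjugate i j) x := by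
  have h : (fun y => (hessM F y).adjugate i j)
      = fun y => ((hessM F y).updateRow j (Pi.single i 1)).det := by
    funext y
    rw [Matrix.adjugate_apply]
  rw [h]
  apply diffAt_det
  intro k l
  rcases eq_or_ne k j with hk | hk
  · subst hk
    simp only [Matrix.updateRow_self]
    exact differentiableAt_const _
  · simp only [Matrix.updateRow_apply, if_neg hk]
    exact diffAt_hess_entry hF hΩ hx k l

lemma diffAt_Uval {F : (ι → ℝ) → ℝ} {Ω : Set (ι → ℝ)}
    (hF : ContDiffOn ℝ (⊤ : ℕ∞) F Ω) (hΩ : IsOpen Ω) {x : ι → ℝ} (hx : x ∈ Ω) :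
    DifferentiableAt ℝ (Uval F) x := by
  have h : Uval F = fun y => ∑ i, pd1 F i y *
      ∑ j, (hessM F y).adjugate i j * pd1 F j y := by
    funext y
    simp only [Uval, Nvec, gradv, dotProduct, mulVec]
  rw [h]
  apply DifferentiableAt.fun_sum
  intro i _
  apply DifferentiableAt.mul
  · exact diffAt_of_contDiffOn (contDiffOn_pd1 hF hΩ i) hΩ hx
  · apply DifferentiableAt.fun_sum
    intro j _
    exact (diffAt_adj_entry hF hΩ hx i j).mul
      (diffAt_of_contDiffOn (contDiffOn_pd1 hF hΩ j) hΩ hx)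

end AnalysisAux

section Symm
variable {n : ℕ}

lemma hess_symm {F : (Fin (n+1) → ℝ) → ℝ} {Ω : Set (Fin (n+1) → ℝ)}
    (hF : ContDiffOn ℝ (⊤ : ℕ∞) F Ω) (hΩ : IsOpen Ω) {x : Fin (n+1) → ℝ} (hx : x ∈ Ω) :
    (hessM F x)ᵀ = hessM F x := by
  have hfd : ContDiffOn ℝ (⊤ : ℕ∞) (fderiv ℝ F) Ω :=
    hF.fderiv_of_isOpen hΩ (le_of_eq rfl)
  have h2 : HasFDerivAt (fderiv ℝ F) (fderiv ℝ (fderiv ℝ F) x) x :=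
    (diffAt_of_contDiffOn hfd hΩ hx).hasFDerivAt
  have h1 : ∀ᶠ y in nhds x, HasFDerivAt F (fderiv ℝ F y) y := by
    filter_upwards [hΩ.mem_nhds hx] with y hy
    exact (diffAt_of_contDiffOn hF hΩ hy).hasFDerivAt
  have hsym := second_derivative_symmetric_of_eventually h1 h2
  have key : ∀ k l : Fin (n+1), pd1 (pd1 F l) k x
      = fderiv ℝ (fderiv ℝ F) x (Pi.single k 1) (Pi.single l 1) := by
    intro k l
    have happ := (ContinuousLinearMap.apply ℝ ℝ (Pi.single l (1:ℝ))).hasFDerivAt.comp x h2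
    have h3 : pd1 (pd1 F l) k x
        = fderiv ℝ (⇑(ContinuousLinearMap.apply ℝ ℝ (Pi.single l (1:ℝ))) ∘ fderiv ℝ F) x
            (Pi.single k 1) := rfl
    rw [h3, happ.fderiv]
    rfl
  ext i j
  show hessM F x j i = hessM F x i j
  show pd1 (pd1 F i) j x = pd1 (pd1 F j) i x
  rw [key, key]
  exact hsym _ _

end Symm

/-- invariance of the equiaffine normal operator `F ↦ 𝔑(F)` under
orientation-preserving external reparameterizations: `𝔑(ψ∘F) = ε·𝔑(F)` where `ε = ±1`
is the constant sign of `ψ'`. -/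
theorem stmt7 (n : ℕ) (hn : 1 ≤ n)
    (Ω : Set (Fin (n+1) → ℝ)) (hΩ : IsOpen Ω) (hΩconn : IsConnected Ω)
    (F : (Fin (n+1) → ℝ) → ℝ) (hF : ContDiffOn ℝ (⊤ : ℕ∞) F Ω)
    (hU : ∀ x ∈ Ω, Uval F x ≠ 0)
    (I : Set ℝ) (hIopen : IsOpen I) (hIconn : I.OrdConnected) (hFI : F '' Ω ⊆ I)
    (ψ : ℝ → ℝ) (hψ : ContDiffOn ℝ (⊤ : ℕ∞) ψ I)
    (ε : ℝ) (hε : ε = 1 ∨ ε = -1)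
    (hψ' : ∀ t ∈ I, 0 < ε * deriv ψ t) :
    (∀ x ∈ Ω, Uval (ψ ∘ F) x ≠ 0) ∧
    (∀ x ∈ Ω, EANormal n (ψ ∘ F) x = ε • EANormal n F x) := by
  classical
  set c1 := deriv ψ with hc1def
  set c2 := deriv c1 with hc2def
  have hn2 : ((n:ℝ) + 2) ≠ 0 := by positivity
  have hFmem : ∀ x ∈ Ω, F x ∈ I := fun x hx => hFI ⟨x, hx, rfl⟩
  have hψdiff : ∀ t ∈ I, HasDerivAt ψ (c1 t) t := fun t ht =>
    ((hψ.differentiableOn (by simp)).differentiableAt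
      (hIopen.mem_nhds ht)).hasDerivAt
  have hc1cd : ContDiffOn ℝ (⊤ : ℕ∞) c1 I := hψ.deriv_of_isOpen hIopen (le_of_eq rfl)
  have hc1diff : ∀ t ∈ I, HasDerivAt c1 (c2 t) t := fun t ht =>
    ((hc1cd.differentiableOn (by simp)).differentiableAt
      (hIopen.mem_nhds ht)).hasDerivAt
  have hc1ne : ∀ t ∈ I, c1 t ≠ 0 := by
    intro t ht h
    have h2 := hψ' t ht
    rw [h, mul_zero] at h2
    exact lt_irrefl _ h2
  have hFd : ∀ x ∈ Ω, DifferentiableAt ℝ F x := fun x hx => diffAt_of_contDiffOn hF hΩ hx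
  -- gradient identity
  have hgrad : ∀ x ∈ Ω, gradv (ψ ∘ F) x = c1 (F x) • gradv F x := by
    intro x hx
    have hψF : HasFDerivAt (ψ ∘ F) (c1 (F x) • fderiv ℝ F x) x :=
      (hψdiff _ (hFmem x hx)).comp_hasFDerivAt x (hFd x hx).hasFDerivAt
    funext i
    show fderiv ℝ (ψ ∘ F) x (Pi.single i 1) = c1 (F x) * fderiv ℝ F x (Pi.single i 1)
    rw [hψF.fderiv]
    simp
  -- Hessian identity
  have hhess : ∀ x ∈ Ω, hessM (ψ ∘ F) x
      = c1 (F x) • hessM F x + c2 (F x) • vecMulVec (gradv F x) (gradv F x) := by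
    intro x hx
    ext i j
    have hEq : pd1 (ψ ∘ F) j =ᶠ[nhds x] fun y => c1 (F y) * pd1 F j y := by
      filter_upwards [hΩ.mem_nhds hx] with y hy
      exact congrFun (hgrad y hy) j
    have h1 : HasFDerivAt (fun y => c1 (F y)) (c2 (F x) • fderiv ℝ F x) x :=
      (hc1diff _ (hFmem x hx)).comp_hasFDerivAt x (hFd x hx).hasFDerivAt
    have h2 : HasFDerivAt (pd1 F j) (fderiv ℝ (pd1 F j) x) x :=
      (diffAt_of_contDiffOn (contDiffOn_pd1 hF hΩ j) hΩ hx).hasFDerivAt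
    have h3 := h1.fun_mul h2
    show fderiv ℝ (pd1 (ψ ∘ F) j) x (Pi.single i 1) = _
    rw [hEq.fderiv_eq, h3.fderiv]
    simp only [ContinuousLinearMap.add_apply, ContinuousLinearMap.smul_apply, smul_eq_mul,
      Matrix.add_apply, Matrix.smul_apply, vecMulVec_apply, hessM, Matrix.of_apply]
    show c1 (F x) * fderiv ℝ (pd1 F j) x (Pi.single i 1)
        + pd1 F j x * (c2 (F x) * fderiv ℝ F x (Pi.single i 1))
      = c1 (F x) * pd1 (pd1 F j) i x + c2 (F x) * (gradv F x i * gradv F x j)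
    show c1 (F x) * pd1 (pd1 F j) i x + pd1 F j x * (c2 (F x) * pd1 F i x)
      = c1 (F x) * pd1 (pd1 F j) i x + c2 (F x) * (pd1 F i x * pd1 F j x)
    ring
  -- U transformation
  have hUG : ∀ x ∈ Ω, Uval (ψ ∘ F) x = (c1 (F x))^(n+2) * Uval F x := by
    intro x hx
    have hUx : gradv F x ⬝ᵥ ((hessM F x).adjugate *ᵥ gradv F x) ≠ 0 := hU x hx
    show gradv (ψ ∘ F) x ⬝ᵥ ((hessM (ψ ∘ F) x).adjugate *ᵥ gradv (ψ ∘ F) x)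
      = (c1 (F x))^(n+2) * (gradv F x ⬝ᵥ ((hessM F x).adjugate *ᵥ gradv F x))
    rw [hgrad x hx, hhess x hx, mulVec_smul,
      adj_comb_mulVec _ _ _ _ (hc1ne _ (hFmem x hx)) hUx, smul_dotProduct,
      dotProduct_smul, dotProduct_smul]
    simp only [smul_eq_mul]
    ring
  -- N transformation
  have hNG : ∀ x ∈ Ω, Nvec (ψ ∘ F) x = (c1 (F x))^(n+1) • Nvec F x := by
    intro x hx
    have hUx : gradv F x ⬝ᵥ ((hessM F x).adjugate *ᵥ gradv F x) ≠ 0 := hU x hx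
    show (hessM (ψ ∘ F) x).adjugate *ᵥ gradv (ψ ∘ F) x
      = (c1 (F x))^(n+1) • ((hessM F x).adjugate *ᵥ gradv F x)
    rw [hgrad x hx, hhess x hx, mulVec_smul,
      adj_comb_mulVec _ _ _ _ (hc1ne _ (hFmem x hx)) hUx, smul_smul]
    congr 1
    ring
  -- sigma transformation
  have hsigmaG : ∀ x ∈ Ω, sigmaF (ψ ∘ F) x = (c1 (F x))⁻¹ • sigmaF F x := by
    intro x hx
    have hUx : gradv F x ⬝ᵥ ((hessM F x).adjugate *ᵥ gradv F x) ≠ 0 := hU x hx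
    have hcx : c1 (F x) ≠ 0 := hc1ne _ (hFmem x hx)
    have hUG' : Uval (ψ ∘ F) x
        = (c1 (F x))^(n+2) * (gradv F x ⬝ᵥ ((hessM F x).adjugate *ᵥ gradv F x)) :=
      hUG x hx
    have hNG' : Nvec (ψ ∘ F) x
        = (c1 (F x))^(n+1) • ((hessM F x).adjugate *ᵥ gradv F x) := hNG x hx
    unfold sigmaF Hdet
    rw [hUG', hNG', hhess x hx, hgrad x hx]
    rw [sigma_comp (hessM F x) (gradv F x) (c1 (F x)) (c2 (F x))
      (hess_symm hF hΩ hx) hcx hUx, ← M1_shape]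
    rfl
  -- mu transformation
  have habs1 : (fun y => Real.log |Uval (ψ ∘ F) y|) = fun y => Real.log (Uval (ψ ∘ F) y) :=
    funext fun y => Real.log_abs _
  have habs2 : (fun y => Real.log |Uval F y|) = fun y => Real.log (Uval F y) :=
    funext fun y => Real.log_abs _
  have hmuG : ∀ x ∈ Ω, muF n (ψ ∘ F) x
      = ((c1 (F x))⁻¹ * c2 (F x)) • gradv F x + muF n F x := by
    intro x hx
    have hcx : c1 (F x) ≠ 0 := hc1ne _ (hFmem x hx)
    have hUd : DifferentiableAt ℝ (Uval F) x := diffAt_Uval hF hΩ hx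
    have hin : HasFDerivAt (fun y => c1 (F y)) (c2 (F x) • fderiv ℝ F x) x :=
      (hc1diff _ (hFmem x hx)).comp_hasFDerivAt x (hFd x hx).hasFDerivAt
    have h1 : HasFDerivAt (fun y => Real.log (c1 (F y)))
        (((c1 (F x))⁻¹ * c2 (F x)) • fderiv ℝ F x) x := by
      have h := (Real.hasDerivAt_log hcx).comp_hasFDerivAt x hin
      simpa [smul_smul, Function.comp_def] using h
    have h2 : HasFDerivAt (fun y => Real.log (Uval F y))
        ((Uval F x)⁻¹ • fderiv ℝ (Uval F) x) x :=
      (Real.hasDerivAt_log (hU x hx)).comp_hasFDerivAt x hUd.hasFDerivAt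
    have htot := (h1.const_mul ((n:ℝ)+2)).fun_add h2
    have hEv : (fun y => Real.log (Uval (ψ ∘ F) y)) =ᶠ[nhds x]
        fun y => ((n:ℝ)+2) * Real.log (c1 (F y)) + Real.log (Uval F y) := by
      filter_upwards [hΩ.mem_nhds hx] with y hy
      rw [hUG y hy, Real.log_mul (pow_ne_zero _ (hc1ne _ (hFmem y hy))) (hU y hy),
        Real.log_pow]
      push_cast
      ring
    funext i
    have hmu1 : muF n (ψ ∘ F) x i
        = ((n:ℝ)+2)⁻¹ * fderiv ℝ (fun y => Real.log (Uval (ψ ∘ F) y)) x (Pi.single i 1) := by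
      simp only [muF, habs1, Pi.smul_apply, smul_eq_mul]
      rfl
    have hmu2 : muF n F x i
        = ((n:ℝ)+2)⁻¹ * ((Uval F x)⁻¹ * fderiv ℝ (Uval F) x (Pi.single i 1)) := by
      simp only [muF, habs2, Pi.smul_apply, smul_eq_mul]
      have : gradv (fun y => Real.log (Uval F y)) x i
          = fderiv ℝ (fun y => Real.log (Uval F y)) x (Pi.single i 1) := rfl
      rw [this, h2.fderiv]
      simp
    have hUx : Uval F x ≠ 0 := hU x hx
    rw [hmu1, hEv.fderiv_eq, htot.fderiv]
    simp only [ContinuousLinearMap.add_apply, ContinuousLinearMap.smul_apply, smul_eq_mul,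
      Pi.add_apply, Pi.smul_apply, hmu2, gradv, pd1]
    field_simp [hUx, hn2]
  -- sigma kills the gradient
  have hsg : ∀ x ∈ Ω, sigmaF F x *ᵥ gradv F x = 0 := by
    intro x hx
    have h := sigma_mulVec_g (hessM F x) (gradv F x) (hU x hx)
    rw [← M1_shape] at h
    exact h
  refine ⟨fun x hx => ?_, fun x hx => ?_⟩
  · rw [hUG x hx]
    exact mul_ne_zero (pow_ne_zero _ (hc1ne _ (hFmem x hx))) (hU x hx)
  · have hcx : c1 (F x) ≠ 0 := hc1ne _ (hFmem x hx)
    have hUx : Uval F x ≠ 0 := hU x hx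
    have hεc : |c1 (F x)| = ε * c1 (F x) := by
      have hpos := hψ' (F x) (hFmem x hx)
      rcases hε with h | h <;> subst h
      · rw [one_mul] at hpos ⊢
        exact abs_of_pos hpos
      · have : c1 (F x) < 0 := by nlinarith
        rw [abs_of_neg this]
        ring
    have hUabs : |Uval (ψ ∘ F) x| ^ ((1:ℝ)/((n:ℝ)+2))
        = (ε * c1 (F x)) * |Uval F x| ^ ((1:ℝ)/((n:ℝ)+2)) := by
      rw [hUG x hx, abs_mul, abs_pow,
        Real.mul_rpow (pow_nonneg (abs_nonneg _) _) (abs_nonneg _)]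
      congr 1
      rw [← Real.rpow_natCast |c1 (F x)| (n+2), ← Real.rpow_mul (abs_nonneg _)]
      push_cast
      rw [mul_one_div, div_self hn2, Real.rpow_one, hεc]
    unfold EANormal
    rw [hUabs, hUG x hx, hNG x hx, hsigmaG x hx, hmuG x hx]
    rw [Matrix.smul_mulVec, Matrix.mulVec_add, Matrix.mulVec_smul, hsg x hx]
    funext i
    simp only [Pi.sub_apply, Pi.smul_apply, Pi.add_apply, smul_eq_mul, smul_zero,
      zero_add, mul_zero, add_zero]
    have hpow : (c1 (F x))^(n+2) ≠ 0 := pow_ne_zero _ hcx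
    field_simp
    ring
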